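/- Let M be the set of fixed-point-free involutions in the symmetric group on the set {1, 2, 3, 4, 5, 6} (M has exactly 15 elements), and let the subgroup H of S₆ generated by the permutations (3 5 4 6), (1 2)(5 6) and (1 4)(2 3)(5 6) act on M by conjugation. Then this action has exactly 4 orbits, of sizes 1, 4, 4 and 6. -/
import Mathlib

set_option maxRecDepth 100000

/-- The set of fixed-point-free involutions of `{1,…,6}` (realized on `Fin 6`). -/
def FPFInv : Set (Equiv.Perm (Fin 6)) := {σ | σ * σ = 1 ∧ ∀ i, σ i ≠ i}

/-- The subgroup of `S₆` generated by `(3 5 4 6)`, `(1 2)(5 6)` and `(1 4)(2 3)(5 6)`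
(zero-indexed on `Fin 6`). -/
def H16 : Subgroup (Equiv.Perm (Fin 6)) :=
  Subgroup.closure
    {Equiv.swap 2 4 * Equiv.swap 4 3 * Equiv.swap 3 5,
     Equiv.swap 0 1 * Equiv.swap 4 5,
     Equiv.swap 0 3 * Equiv.swap 1 2 * Equiv.swap 4 5}

/-- The orbits of the conjugation action of `H16` on `FPFInv`. -/
def Orbits16 : Set (Set (Equiv.Perm (Fin 6))) :=
  (fun σ => {τ | ∃ g ∈ H16, g * σ * g⁻¹ = τ}) '' FPFInv

namespace Aux16

open Equiv

abbrev P6 := Perm (Fin 6)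

def ga : P6 := Equiv.swap 2 4 * Equiv.swap 4 3 * Equiv.swap 3 5
def gb : P6 := Equiv.swap 0 1 * Equiv.swap 4 5
def gc : P6 := Equiv.swap 0 3 * Equiv.swap 1 2 * Equiv.swap 4 5

lemma ga_mem : ga ∈ H16 := Subgroup.subset_closure (by left; rfl)
lemma gb_mem : gb ∈ H16 := Subgroup.subset_closure (by right; left; rfl)
lemma gc_mem : gc ∈ H16 := Subgroup.subset_closure (by right; right; rfl)

def sw (i j : Fin 6) : P6 := Equiv.swap i j

-- the 15 fixed-point-free involutions
def m1  : P6 := sw 0 1 * sw 2 3 * sw 4 5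
def m2  : P6 := sw 0 1 * sw 2 4 * sw 3 5
def m3  : P6 := sw 0 1 * sw 2 5 * sw 3 4
def m4  : P6 := sw 0 2 * sw 1 3 * sw 4 5
def m5  : P6 := sw 0 3 * sw 1 2 * sw 4 5
def m6  : P6 := sw 0 4 * sw 1 5 * sw 2 3
def m7  : P6 := sw 0 5 * sw 1 4 * sw 2 3
def m8  : P6 := sw 0 2 * sw 1 4 * sw 3 5
def m9  : P6 := sw 0 3 * sw 1 5 * sw 2 4
def m10 : P6 := sw 0 4 * sw 1 3 * sw 2 5
def m11 : P6 := sw 0 5 * sw 1 2 * sw 3 4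
def m12 : P6 := sw 0 2 * sw 1 5 * sw 3 4
def m13 : P6 := sw 0 3 * sw 1 4 * sw 2 5
def m14 : P6 := sw 0 4 * sw 1 2 * sw 3 5
def m15 : P6 := sw 0 5 * sw 1 3 * sw 2 4

def O1 : Finset P6 := {m1}
def O2 : Finset P6 := {m2, m3, m4, m5, m6, m7}
def O3 : Finset P6 := {m8, m9, m10, m11}
def O4 : Finset P6 := {m12, m13, m14, m15}
def F : Finset P6 := O1 ∪ O2 ∪ O3 ∪ O4

/-- The orbit map. -/
def orb (σ : P6) : Set P6 := {τ | ∃ g ∈ H16, g * σ * g⁻¹ = τ}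

lemma self_mem_orb (σ : P6) : σ ∈ orb σ := ⟨1, one_mem _, by group⟩

lemma conj_mem_orb {σ τ : P6} (h : τ ∈ orb σ) {g : P6} (hg : g ∈ H16) :
    g * τ * g⁻¹ ∈ orb σ := by
  obtain ⟨k, hk, rfl⟩ := h
  exact ⟨g * k, mul_mem hg hk, by group⟩

lemma orb_eq_of_mem {σ τ : P6} (h : τ ∈ orb σ) : orb τ = orb σ := by
  obtain ⟨g, hg, rfl⟩ := h
  ext x
  constructor
  · rintro ⟨k, hk, rfl⟩
    exact ⟨k * g, mul_mem hk hg, by group⟩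
  · rintro ⟨k, hk, rfl⟩
    exact ⟨k * g⁻¹, mul_mem hk (inv_mem hg), by group⟩

/-- Upper bound for orbits by closure induction. -/
lemma orb_subset (σ : P6) (O : Finset P6) (hσ : σ ∈ O)
    (h : ∀ τ ∈ O, ga * τ * ga⁻¹ ∈ O ∧ ga⁻¹ * τ * ga ∈ O ∧ gb * τ * gb⁻¹ ∈ O ∧
        gb⁻¹ * τ * gb ∈ O ∧ gc * τ * gc⁻¹ ∈ O ∧ gc⁻¹ * τ * gc ∈ O) :
    orb σ ⊆ ↑O := by
  rintro x ⟨g, hg, rfl⟩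
  have key : ∀ g ∈ H16, (∀ τ ∈ O, g * τ * g⁻¹ ∈ O) ∧ (∀ τ ∈ O, g⁻¹ * τ * g ∈ O) := by
    intro g hg
    induction hg using Subgroup.closure_induction with
    | mem x hx =>
      rcases hx with hx | hx | hx <;> subst hx
      · exact ⟨fun τ hτ => (h τ hτ).1, fun τ hτ => (h τ hτ).2.1⟩
      · exact ⟨fun τ hτ => (h τ hτ).2.2.1, fun τ hτ => (h τ hτ).2.2.2.1⟩
      · exact ⟨fun τ hτ => (h τ hτ).2.2.2.2.1, fun τ hτ => (h τ hτ).2.2.2.2.2⟩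
    | one => simp
    | mul x y hx hy ihx ihy =>
      refine ⟨fun τ hτ => ?_, fun τ hτ => ?_⟩
      · have := ihx.1 _ (ihy.1 τ hτ)
        rw [show x * y * τ * (x * y)⁻¹ = x * (y * τ * y⁻¹) * x⁻¹ by group]
        exact this
      · have := ihy.2 _ (ihx.2 τ hτ)
        rw [mul_inv_rev]
        rw [show y⁻¹ * x⁻¹ * τ * (x * y) = y⁻¹ * (x⁻¹ * τ * x) * y by group]
        exact this
    | inv x hx ih => exact ⟨ih.2, by simpa using ih.1⟩
  exact (key g hg).1 σ hσ

lemma orb1 : orb m1 = ↑O1 := by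
  apply Set.Subset.antisymm
  · exact orb_subset m1 O1 (by decide) (by decide)
  · intro τ hτ
    have : τ = m1 := (by decide : ∀ τ ∈ O1, τ = m1) τ hτ
    subst this; exact self_mem_orb _

lemma orb2 : orb m2 = ↑O2 := by
  apply Set.Subset.antisymm
  · exact orb_subset m2 O2 (by decide) (by decide)
  · intro τ hτ
    have h2 : m2 ∈ orb m2 := self_mem_orb _
    have h3 : m3 ∈ orb m2 := by
      have := conj_mem_orb h2 ga_mem
      have e : ga * m2 * ga⁻¹ = m3 := by decide
      rwa [e] at this
    have h6 : m6 ∈ orb m2 := by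
      have := conj_mem_orb h2 gc_mem
      have e : gc * m2 * gc⁻¹ = m6 := by decide
      rwa [e] at this
    have h4 : m4 ∈ orb m2 := by
      have := conj_mem_orb h6 (inv_mem ga_mem)
      have e : ga⁻¹ * m6 * ga⁻¹⁻¹ = m4 := by decide
      rwa [e] at this
    have h5 : m5 ∈ orb m2 := by
      have := conj_mem_orb h6 ga_mem
      have e : ga * m6 * ga⁻¹ = m5 := by decide
      rwa [e] at this
    have h7 : m7 ∈ orb m2 := by
      have := conj_mem_orb h3 gc_mem
      have e : gc * m3 * gc⁻¹ = m7 := by decide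
      rwa [e] at this
    have : τ = m2 ∨ τ = m3 ∨ τ = m4 ∨ τ = m5 ∨ τ = m6 ∨ τ = m7 :=
      (by decide : ∀ τ ∈ O2, τ = m2 ∨ τ = m3 ∨ τ = m4 ∨ τ = m5 ∨ τ = m6 ∨ τ = m7) τ hτ
    rcases this with rfl | rfl | rfl | rfl | rfl | rfl <;> assumption

lemma orb3 : orb m8 = ↑O3 := by
  apply Set.Subset.antisymm
  · exact orb_subset m8 O3 (by decide) (by decide)
  · intro τ hτ
    have h8 : m8 ∈ orb m8 := self_mem_orb _
    have h10 : m10 ∈ orb m8 := by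
      have := conj_mem_orb h8 ga_mem
      have e : ga * m8 * ga⁻¹ = m10 := by decide
      rwa [e] at this
    have h9 : m9 ∈ orb m8 := by
      have := conj_mem_orb h10 ga_mem
      have e : ga * m10 * ga⁻¹ = m9 := by decide
      rwa [e] at this
    have h11 : m11 ∈ orb m8 := by
      have := conj_mem_orb h8 (inv_mem ga_mem)
      have e : ga⁻¹ * m8 * ga⁻¹⁻¹ = m11 := by decide
      rwa [e] at this
    have : τ = m8 ∨ τ = m9 ∨ τ = m10 ∨ τ = m11 :=
      (by decide : ∀ τ ∈ O3, τ = m8 ∨ τ = m9 ∨ τ = m10 ∨ τ = m11) τ hτ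
    rcases this with rfl | rfl | rfl | rfl <;> assumption

lemma orb4 : orb m12 = ↑O4 := by
  apply Set.Subset.antisymm
  · exact orb_subset m12 O4 (by decide) (by decide)
  · intro τ hτ
    have h12 : m12 ∈ orb m12 := self_mem_orb _
    have h14 : m14 ∈ orb m12 := by
      have := conj_mem_orb h12 ga_mem
      have e : ga * m12 * ga⁻¹ = m14 := by decide
      rwa [e] at this
    have h13 : m13 ∈ orb m12 := by
      have := conj_mem_orb h14 ga_mem
      have e : ga * m14 * ga⁻¹ = m13 := by decide
      rwa [e] at this
    have h15 : m15 ∈ orb m12 := by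
      have := conj_mem_orb h12 (inv_mem ga_mem)
      have e : ga⁻¹ * m12 * ga⁻¹⁻¹ = m15 := by decide
      rwa [e] at this
    have : τ = m12 ∨ τ = m13 ∨ τ = m14 ∨ τ = m15 :=
      (by decide : ∀ τ ∈ O4, τ = m12 ∨ τ = m13 ∨ τ = m14 ∨ τ = m15) τ hτ
    rcases this with rfl | rfl | rfl | rfl <;> assumption

set_option maxHeartbeats 2000000 in
lemma FPFInv_eq : FPFInv = ↑F := by
  ext σ
  simp only [FPFInv, Set.mem_setOf_eq, Finset.mem_coe]
  revert σ
  decide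

lemma orbits_eq : Orbits16 = {↑O1, ↑O2, ↑O3, ↑O4} := by
  have horbconst : ∀ {r : P6} {O : Finset P6}, orb r = ↑O → ∀ σ ∈ O, orb σ = ↑O := by
    intro r O hO σ hσ
    have : σ ∈ orb r := by rw [hO]; exact_mod_cast hσ
    rw [orb_eq_of_mem this, hO]
  ext S
  constructor
  · rintro ⟨σ, hσ, rfl⟩
    rw [FPFInv_eq] at hσ
    have : σ ∈ O1 ∨ σ ∈ O2 ∨ σ ∈ O3 ∨ σ ∈ O4 :=
      (by decide : ∀ σ ∈ F, σ ∈ O1 ∨ σ ∈ O2 ∨ σ ∈ O3 ∨ σ ∈ O4) σ hσ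
    rcases this with h | h | h | h
    · left; exact horbconst orb1 σ h
    · right; left; exact horbconst orb2 σ h
    · right; right; left; exact horbconst orb3 σ h
    · right; right; right; exact horbconst orb4 σ h
  · intro hS
    rcases hS with rfl | rfl | rfl | rfl
    · exact ⟨m1, by rw [FPFInv_eq]; decide, orb1⟩
    · exact ⟨m2, by rw [FPFInv_eq]; decide, orb2⟩
    · exact ⟨m8, by rw [FPFInv_eq]; decide, orb3⟩
    · exact ⟨m12, by rw [FPFInv_eq]; decide, orb4⟩

lemma ne12 : (↑O1 : Set P6) ≠ ↑O2 := by simp only [ne_eq, Finset.coe_inj]; decide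
lemma ne13 : (↑O1 : Set P6) ≠ ↑O3 := by simp only [ne_eq, Finset.coe_inj]; decide
lemma ne14 : (↑O1 : Set P6) ≠ ↑O4 := by simp only [ne_eq, Finset.coe_inj]; decide
lemma ne23 : (↑O2 : Set P6) ≠ ↑O3 := by simp only [ne_eq, Finset.coe_inj]; decide
lemma ne24 : (↑O2 : Set P6) ≠ ↑O4 := by simp only [ne_eq, Finset.coe_inj]; decide
lemma ne34 : (↑O3 : Set P6) ≠ ↑O4 := by simp only [ne_eq, Finset.coe_inj]; decide

lemma card1 : (↑O1 : Set P6).ncard = 1 := by rw [Set.ncard_coe_finset]; decide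
lemma card2 : (↑O2 : Set P6).ncard = 6 := by rw [Set.ncard_coe_finset]; decide
lemma card3 : (↑O3 : Set P6).ncard = 4 := by rw [Set.ncard_coe_finset]; decide
lemma card4 : (↑O4 : Set P6).ncard = 4 := by rw [Set.ncard_coe_finset]; decide

end Aux16

theorem stmt16 :
    FPFInv.ncard = 15 ∧
    Orbits16.ncard = 4 ∧
    {S ∈ Orbits16 | S.ncard = 1}.ncard = 1 ∧
    {S ∈ Orbits16 | S.ncard = 4}.ncard = 2 ∧
    {S ∈ Orbits16 | S.ncard = 6}.ncard = 1 := by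
  open Aux16 in
  refine ⟨?_, ?_, ?_, ?_, ?_⟩
  · rw [Aux16.FPFInv_eq, Set.ncard_coe_finset]; decide
  · rw [Aux16.orbits_eq]
    rw [Set.ncard_insert_of_notMem (by simp only [Set.mem_insert_iff, Set.mem_singleton_iff, Finset.coe_inj]; decide)
        (Set.Finite.insert _ (Set.Finite.insert _ (Set.finite_singleton _)))]
    rw [Set.ncard_insert_of_notMem (by simp only [Set.mem_insert_iff, Set.mem_singleton_iff, Finset.coe_inj]; decide)
        (Set.Finite.insert _ (Set.finite_singleton _))]
    rw [Set.ncard_insert_of_notMem (by simp only [Set.mem_singleton_iff, Finset.coe_inj]; decide) (Set.finite_singleton _)]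
    rw [Set.ncard_singleton]
  · have : {S ∈ Orbits16 | S.ncard = 1} = {(↑Aux16.O1 : Set Aux16.P6)} := by
      rw [Aux16.orbits_eq]
      ext S
      simp only [Set.mem_setOf_eq, Set.mem_insert_iff, Set.mem_singleton_iff]
      constructor
      · rintro ⟨rfl | rfl | rfl | rfl, hc⟩
        · rfl
        · rw [Aux16.card2] at hc; omega
        · rw [Aux16.card3] at hc; omega
        · rw [Aux16.card4] at hc; omega
      · rintro rfl; exact ⟨Or.inl rfl, Aux16.card1⟩
    rw [this, Set.ncard_singleton]
  · have : {S ∈ Orbits16 | S.ncard = 4} = {(↑Aux16.O3 : Set Aux16.P6), ↑Aux16.O4} := by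
      rw [Aux16.orbits_eq]
      ext S
      simp only [Set.mem_setOf_eq, Set.mem_insert_iff, Set.mem_singleton_iff]
      constructor
      · rintro ⟨rfl | rfl | rfl | rfl, hc⟩
        · rw [Aux16.card1] at hc; omega
        · rw [Aux16.card2] at hc; omega
        · exact Or.inl rfl
        · exact Or.inr rfl
      · rintro (rfl | rfl)
        · exact ⟨Or.inr (Or.inr (Or.inl rfl)), Aux16.card3⟩
        · exact ⟨Or.inr (Or.inr (Or.inr rfl)), Aux16.card4⟩
    rw [this, Set.ncard_insert_of_notMem (by simp only [Set.mem_singleton_iff, Finset.coe_inj]; decide) (Set.finite_singleton _),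
        Set.ncard_singleton]
  · have : {S ∈ Orbits16 | S.ncard = 6} = {(↑Aux16.O2 : Set Aux16.P6)} := by
      rw [Aux16.orbits_eq]
      ext S
      simp only [Set.mem_setOf_eq, Set.mem_insert_iff, Set.mem_singleton_iff]
      constructor
      · rintro ⟨rfl | rfl | rfl | rfl, hc⟩
        · rw [Aux16.card1] at hc; omega
        · rfl
        · rw [Aux16.card3] at hc; omega
        · rw [Aux16.card4] at hc; omega
      · rintro rfl; exact ⟨Or.inr (Or.inl rfl), Aux16.card2⟩
    rw [this, Set.ncard_singleton]
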